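/- arXiv:1704.07408 — 2 statements merged into one kernel-verified Lean document; each statement's English description precedes it below -/
import Mathlib

section
/- Let H be a subgroup of π₁(X, x₀) and let X be a locally path-connected space that is H-SLT at x₀. Then H is an open subgroup of π₁^wh(X, x₀) if and only if H is an open subgroup of π₁^qtop(X, x₀). -/
open Set TopologicalSpace unitInterval

universe u

namespace SLTF

attribute [local instance] Path.Homotopic.setoid

variable {X : Type u} [TopologicalSpace X]

/-- The homotopy class of a loop as an element of the fundamental group. -/
noncomputable def fl {x : X} (γ : Path x x) : FundamentalGroup X x :=
  @FundamentalGroup.fromPath X _ x ⟦γ⟧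

/-- Multiplication of fundamental-group elements in path-concatenation order:
`pmul a b` is the class of "`a` followed by `b`". -/
noncomputable def pmul {x : X} (a b : FundamentalGroup X x) : FundamentalGroup X x :=
  @FundamentalGroup.fromPath X _ x
    (Path.Homotopic.Quotient.trans (@FundamentalGroup.toPath X _ x a)
      (@FundamentalGroup.toPath X _ x b))

/-- A path in `X` starting at the base point `x`, recorded together with its end point. -/
structure PPath (X : Type u) [TopologicalSpace X] (x : X) where
  target : X
  path : Path x target

/-- Two paths starting at `x` are identified when they have the same end point and the
class of `α ⬝ β⁻¹` satisfies the predicate `P` (e.g. membership in a subgroup `H`). -/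
def HRel (x : X) (P : Path x x → Prop) (α β : PPath X x) : Prop :=
  ∃ h : α.target = β.target, P (α.path.trans ((β.path.cast rfl h).symm))

/-- The set `X̃` of `P`-equivalence classes of paths starting at `x`. -/
def Xtilde (x : X) (P : Path x x → Prop) : Type u := Quot (HRel x P)

/-- The class of a path in `X̃`. -/
def mkX (x : X) (P : Path x x → Prop) (α : PPath X x) : Xtilde x P := Quot.mk _ α

/-- The basic whisker-open set `([α], U)`: all classes of prolongations of `α` by a path in `U`. -/
def whBasic (x : X) (P : Path x x → Prop) (α : PPath X x) (U : Set X) : Set (Xtilde x P) :=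
  { q | ∃ (y : X) (β : Path α.target y), range ⇑β ⊆ U ∧ q = mkX x P ⟨y, α.path.trans β⟩ }

/-- The whisker topology on `X̃`, generated by the sets `([α], U)` for `U` an open
neighbourhood of the end point of `α`. -/
instance whTop (x : X) (P : Path x x → Prop) : TopologicalSpace (Xtilde x P) :=
  generateFrom
    { S | ∃ (α : PPath X x) (U : Set X), IsOpen U ∧ α.target ∈ U ∧ S = whBasic x P α U }

/-- The endpoint projection `p : X̃ → X`. -/
def endpt (x : X) (P : Path x x → Prop) : Xtilde x P → X :=
  Quot.lift (fun α => α.target) (fun _ _ h => h.elim fun e _ => e)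

/-- The space of paths in `X` starting at `x`, with the compact-open topology. -/
def PSp (X : Type u) [TopologicalSpace X] (x : X) : Type u := { f : C(I, X) // f 0 = x }

instance (x : X) : TopologicalSpace (PSp X x) := instTopologicalSpaceSubtype

/-- The natural surjection from the path space onto `X̃`. -/
def toXt (x : X) (P : Path x x → Prop) : PSp X x → Xtilde x P :=
  fun f => mkX x P ⟨f.1 1, ⟨f.1, f.2, rfl⟩⟩

/-- The quotient of the compact-open topology on `X̃`. -/
def topTop (x : X) (P : Path x x → Prop) : TopologicalSpace (Xtilde x P) :=
  coinduced (toXt x P) inferInstance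

/-- Membership in a subgroup `H`, as a predicate on loops. -/
noncomputable def loopMem (x : X) (H : Subgroup (FundamentalGroup X x)) : Path x x → Prop :=
  fun γ => fl γ ∈ H

/-- `X̃_H`, the classes of paths starting at `x₀` modulo `H`. -/
abbrev XtildeH (x₀ : X) (H : Subgroup (FundamentalGroup X x₀)) : Type u :=
  Xtilde x₀ (loopMem x₀ H)

/-- The fiber of the endpoint projection over `y`, with the subspace (whisker) topology. -/
abbrev Fib (x : X) (P : Path x x → Prop) (y : X) : Type u :=
  { q : Xtilde x P // endpt x P q = y }

/-- The class in the fiber over `y` of a path from `x` to `y`. -/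
def mkFib (x : X) (P : Path x x → Prop) {y : X} (δ : Path x y) : Fib x P y :=
  ⟨mkX x P ⟨y, δ⟩, rfl⟩

/-- The whisker topology on the fundamental group `π₁(X, x)`: basic neighbourhoods of `a`
are the sets `{a ⋆ [γ] : γ a loop in U at x}` for `U` an open neighbourhood of `x`. -/
noncomputable def whPi1 (x : X) : TopologicalSpace (FundamentalGroup X x) :=
  generateFrom
    { S | ∃ (a : FundamentalGroup X x) (U : Set X), IsOpen U ∧ x ∈ U ∧
        S = { b | ∃ γ : Path x x, range ⇑γ ⊆ U ∧ b = pmul a (fl γ) } }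

/-- The quotient topology on `π₁(X, x)` induced from the loop space with the
compact-open topology. -/
noncomputable def qtopPi1 (x : X) : TopologicalSpace (FundamentalGroup X x) :=
  coinduced (fun γ : Path x x => fl γ) inferInstance

/-- `X` is `H`-SLT at `x₀`. -/
noncomputable def IsHSLTAt (x₀ : X) (H : Subgroup (FundamentalGroup X x₀)) : Prop :=
  ∀ (y : X) (α : Path x₀ y) (U : Set X), IsOpen U → x₀ ∈ U →
    ∃ V : Set X, IsOpen V ∧ y ∈ V ∧
      ∀ β : Path y y, range ⇑β ⊆ V →
        ∃ γ : Path x₀ x₀, range ⇑γ ⊆ U ∧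
          fl ((α.trans (β.trans α.symm)).trans γ.symm) ∈ H

/-- `X` is SLT at `x`. -/
def IsSLTAt (X : Type u) [TopologicalSpace X] (x : X) : Prop :=
  ∀ (y : X) (α : Path x y) (U : Set X), IsOpen U → x ∈ U →
    ∃ V : Set X, IsOpen V ∧ y ∈ V ∧
      ∀ β : Path y y, range ⇑β ⊆ V →
        ∃ γ : Path x x, range ⇑γ ⊆ U ∧ (α.trans (β.trans α.symm)).Homotopic γ

/-- `X` is an SLT space. -/
def IsSLT (X : Type u) [TopologicalSpace X] : Prop := ∀ x : X, IsSLTAt X x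

/-- `α` (a path from `x` to `y`) is an `H`-SLT path: for every path `lam` from `x₀` to `x`
and open `U ∋ x` there is an open `V ∋ y` such that every loop `β` in `V` at `y` transfers
to a loop `γ` in `U` at `x` with `[α ⋆ β ⋆ α⁻¹ ⋆ γ⁻¹] ∈ [lam⁻¹ H lam]`, i.e.
`[lam ⋆ (α ⋆ β ⋆ α⁻¹ ⋆ γ⁻¹) ⋆ lam⁻¹] ∈ H`. -/
noncomputable def IsHSLTPath (x₀ : X) (H : Subgroup (FundamentalGroup X x₀)) {x y : X}
    (α : Path x y) : Prop :=
  ∀ (lam : Path x₀ x) (U : Set X), IsOpen U → x ∈ U →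
    ∃ V : Set X, IsOpen V ∧ y ∈ V ∧
      ∀ β : Path y y, range ⇑β ⊆ V →
        ∃ γ : Path x x, range ⇑γ ⊆ U ∧
          fl (lam.trans ((((α.trans (β.trans α.symm)).trans γ.symm)).trans lam.symm)) ∈ H

/-- `X` is an `H`-SLT space: for every `x` and every path `lam` from `x₀` to `x`, `X` is
`[lam⁻¹ H lam]`-SLT at `x`. -/
noncomputable def IsHSLTSpace (x₀ : X) (H : Subgroup (FundamentalGroup X x₀)) : Prop :=
  ∀ (x y : X) (α : Path x y), IsHSLTPath x₀ H α

/-- Membership in the conjugate subgroup `[lam⁻¹ H lam]` of `π₁(X, x)`,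
as a predicate on loops at `x`. -/
noncomputable def conjMem (x₀ : X) (H : Subgroup (FundamentalGroup X x₀)) {x : X}
    (lam : Path x₀ x) : Path x x → Prop :=
  fun δ => fl (lam.trans (δ.trans lam.symm)) ∈ H

/-- `X` is homotopically Hausdorff relative to `H`. -/
noncomputable def HomHausdorffRel (x₀ : X) (H : Subgroup (FundamentalGroup X x₀)) : Prop :=
  ∀ (y : X) (α : Path x₀ y) (g : FundamentalGroup X x₀), g ∉ H →
    ∃ U : Set X, IsOpen U ∧ y ∈ U ∧
      ∀ γ : Path y y, range ⇑γ ⊆ U →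
        ¬ ∃ h ∈ H, fl (α.trans (γ.trans α.symm)) = pmul h g

/-- `X` is homotopically path Hausdorff relative to `H`. -/
noncomputable def HomPathHausdorffRel (x₀ : X) (H : Subgroup (FundamentalGroup X x₀)) : Prop :=
  ∀ (y : X) (α β : Path x₀ y), fl (α.trans β.symm) ∉ H →
    ∃ (n : ℕ) (t : Fin (n + 1) → I) (U : Fin n → Set X),
      t 0 = 0 ∧ t (Fin.last n) = 1 ∧ StrictMono t ∧
      (∀ i : Fin n, IsOpen (U i)) ∧
      (∀ i : Fin n, ⇑α '' Set.Icc (t i.castSucc) (t i.succ) ⊆ U i) ∧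
      ∀ γ : Path x₀ y,
        (∀ i : Fin n, ⇑γ '' Set.Icc (t i.castSucc) (t i.succ) ⊆ U i) →
        (∀ i : Fin (n + 1), γ (t i) = α (t i)) →
        fl (γ.trans β.symm) ∉ H

/-- The endpoint projection `p : X̃ → X` (with the whisker topology on `X̃`) has the
unique path lifting property. -/
def UPLP (x : X) (P : Path x x → Prop) : Prop :=
  ∀ g₁ g₂ : C(I, Xtilde x P), g₁ 0 = g₂ 0 →
    (∀ t, endpt x P (g₁ t) = endpt x P (g₂ t)) → g₁ = g₂

/-- A semicovering map: a local homeomorphism with (continuous) unique lifting of paths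
and of homotopies. -/
structure IsSemicovering {Y : Type u} [TopologicalSpace Y] (p : Y → X) : Prop where
  localHomeo : IsLocalHomeomorph p
  pathLift : ∀ (y : Y) (γ : C(I, X)), γ 0 = p y →
    ∃! γh : C(I, Y), γh 0 = y ∧ ∀ t, p (γh t) = γ t
  contPathLift : ∀ y : Y, ∃ L : { γ : C(I, X) // γ 0 = p y } → C(I, Y),
    Continuous L ∧ ∀ γ, (L γ) 0 = y ∧ ∀ t, p ((L γ) t) = (γ : C(I, X)) t
  homotopyLift : ∀ (y : Y) (Φ : C(I × I, X)), Φ (0, 0) = p y →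
    ∃! Φh : C(I × I, Y), Φh (0, 0) = y ∧ ∀ z, p (Φh z) = Φ z
  contHomotopyLift : ∀ y : Y, ∃ L : { Φ : C(I × I, X) // Φ (0, 0) = p y } → C(I × I, Y),
    Continuous L ∧ ∀ Φ, (L Φ) (0, 0) = y ∧ ∀ z, p ((L Φ) z) = (Φ : C(I × I, X)) z

/-- An `lpc₀`-covering map with `p₊π₁(Y, ·) = H`: a map which is equivalent, as a map
over `X`, to the endpoint projection `p_H : X̃_H → X` having the unique path lifting
property (with `Y` path connected and locally path connected). -/
structure IsLpc0Covering {Y : Type u} [TopologicalSpace Y] (p : Y → X) (x₀ : X)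
    (H : Subgroup (FundamentalGroup X x₀)) : Prop where
  pathConnected : PathConnectedSpace Y
  locPathConnected : LocPathConnectedSpace Y
  uplp : UPLP x₀ (loopMem x₀ H)
  equiv : ∃ φ : Y ≃ₜ XtildeH x₀ H, ∀ y, endpt x₀ (loopMem x₀ H) (φ y) = p y

/-- The homomorphism induced by `p` on fundamental groups, as a function. -/
noncomputable def pStar {Y : Type u} [TopologicalSpace Y] (p : C(Y, X)) (y₀ : Y) :
    FundamentalGroup Y y₀ → FundamentalGroup X (p y₀) :=
  fun g => @FundamentalGroup.fromPath X _ (p y₀)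
    (Path.Homotopic.Quotient.map (@FundamentalGroup.toPath Y _ y₀ g) p)



/-! ### Auxiliary machinery (added for the proof of `statement16`) -/

open CategoryTheory Topology Filter Metric

section AuxAlgebra

variable {X : Type u} [TopologicalSpace X]

/-- The class of a path as an arrow in the fundamental groupoid. -/
def pc {u v : X} (p : Path u v) :
    FundamentalGroupoid.mk u ⟶ FundamentalGroupoid.mk v := ⟦p⟧

/-- An endo-arrow of the fundamental groupoid as an element of the fundamental group. -/
noncomputable def fa {x : X} (p : FundamentalGroupoid.mk x ⟶ FundamentalGroupoid.mk x) :
    FundamentalGroup X x :=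
  @FundamentalGroup.fromPath X _ x p

lemma fl_eq_fa {x : X} (γ : Path x x) : fl γ = fa (pc γ) := rfl

lemma pmul_eq {x : X} (a b : FundamentalGroup X x) : pmul a b = b * a := rfl

lemma fa_comp {x : X} (p q : FundamentalGroupoid.mk x ⟶ FundamentalGroupoid.mk x) :
    fa (p ≫ q) = fa q * fa p := rfl

lemma fa_id {x : X} : fa (𝟙 (FundamentalGroupoid.mk x)) = 1 := rfl

lemma fa_inv {x : X} (p : FundamentalGroupoid.mk x ⟶ FundamentalGroupoid.mk x) :
    fa (inv p) = (fa p)⁻¹ := by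
  have h : fa (p ≫ inv p) = fa (inv p) * fa p := fa_comp _ _
  rw [IsIso.hom_inv_id, fa_id] at h
  exact (eq_inv_of_mul_eq_one_left h.symm)

lemma fa_toPath {x : X} (g : FundamentalGroup X x) :
    fa (@FundamentalGroup.toPath X _ x g) = g := rfl

lemma pc_trans {u v w : X} (p : Path u v) (q : Path v w) :
    pc (p.trans q) = pc p ≫ pc q :=
  rfl

lemma pc_symm {u v : X} (p : Path u v) : pc p.symm = inv (pc p) := by
  rw [← Groupoid.inv_eq_inv]; rfl

lemma pc_homotopic {u v : X} {p q : Path u v} (h : p.Homotopic q) : pc p = pc q :=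
  Quotient.sound h

lemma pc_refl {x : X} : pc (Path.refl x) = 𝟙 (FundamentalGroupoid.mk x) := rfl

lemma pc_cast {u v u' v' : X} (p : Path u v) (hu : u' = u) (hv : v' = v) :
    pc (p.cast hu hv) =
      eqToHom (by rw [hu]) ≫ pc p ≫ eqToHom (show FundamentalGroupoid.mk v =
        FundamentalGroupoid.mk v' by rw [hv]) := by
  subst hu; subst hv
  simp only [eqToHom_refl, Category.comp_id, Category.id_comp]
  congr 1

lemma fl_trans {x : X} (p q : Path x x) : fl (p.trans q) = fl q * fl p := by
  rw [fl_eq_fa, pc_trans, fa_comp, ← fl_eq_fa, ← fl_eq_fa]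

lemma fl_refl {x : X} : fl (Path.refl x) = 1 := by
  rw [fl_eq_fa, pc_refl, fa_id]

lemma fl_surj {x : X} (g : FundamentalGroup X x) : ∃ γ : Path x x, fl γ = g := by
  obtain ⟨γ, hγ⟩ := Quotient.exists_rep (@FundamentalGroup.toPath X _ x g)
  exact ⟨γ, by rw [← fa_toPath g, ← hγ]; rfl⟩

end AuxAlgebra

section AuxSubpath

instance : ContractibleSpace I :=
  (convex_Icc (0:ℝ) 1).contractibleSpace (Set.nonempty_Icc.2 zero_le_one)

/-- The straight segment from `a` to `b` in the unit interval, as a path. -/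
def seg (a b : I) : Path a b where
  toFun t := ⟨(1 - (t:ℝ)) * a + t * b, by
    have := (convex_Icc (0:ℝ) 1) a.2 b.2 (sub_nonneg.2 t.2.2) t.2.1 (by ring)
    simpa [smul_eq_mul] using this⟩
  continuous_toFun := by
    apply Continuous.subtype_mk
    fun_prop
  source' := by ext; simp
  target' := by ext; simp

lemma seg_apply (a b : I) (t : I) :
    ((seg a b t : I) : ℝ) = (1 - (t:ℝ)) * a + t * b := rfl

lemma seg_symm (a b : I) : (seg a b).symm = seg b a := by
  ext t
  show ((seg a b) (σ t) : ℝ) = _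
  rw [seg_apply, seg_apply, unitInterval.coe_symm_eq]
  ring

lemma seg_mem_Icc {a b : I} (h : a ≤ b) (t : I) : seg a b t ∈ Icc a b := by
  have hab : (a:ℝ) ≤ b := h
  have h1 := t.2.1; have h2 := t.2.2
  constructor <;> · rw [← Subtype.coe_le_coe, seg_apply]; nlinarith

lemma seg_dist (a b : I) (t : I) : dist (seg a b t) b ≤ dist a b := by
  rw [Subtype.dist_eq, Subtype.dist_eq, Real.dist_eq, Real.dist_eq, seg_apply]
  have h1 : (1 - (t:ℝ)) * a + t * b - b = (1 - (t:ℝ)) * (a - b) := by ring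
  rw [h1, abs_mul, abs_of_nonneg (by nlinarith [t.2.2] : (0:ℝ) ≤ 1 - t)]
  nlinarith [abs_nonneg ((a:ℝ) - b), t.2.1, t.2.2]

variable {X : Type u} [TopologicalSpace X]

/-- The subpath of `γ` from `γ a` to `γ b`. -/
def subp {u v : X} (γ : Path u v) (a b : I) : Path (γ a) (γ b) :=
  (seg a b).map γ.continuous_toFun

lemma subp_apply {u v : X} (γ : Path u v) (a b t : I) : subp γ a b t = γ (seg a b t) := rfl

lemma subp_symm {u v : X} (γ : Path u v) (a b : I) : (subp γ a b).symm = subp γ b a := by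
  rw [subp, Path.map_symm, seg_symm]; rfl

lemma subp_trans {u v : X} (γ : Path u v) (a b c : I) :
    ((subp γ a b).trans (subp γ b c)).Homotopic (subp γ a c) := by
  have h : ((seg a b).trans (seg b c)).Homotopic (seg a c) :=
    SimplyConnectedSpace.paths_homotopic _ _
  have h2 := Path.Homotopic.map h γ.toContinuousMap
  rw [Path.map_trans] at h2
  exact h2

lemma subp_zero_one {u v : X} (γ : Path u v) :
    (subp γ 0 1).Homotopic (γ.cast γ.source γ.target) := by
  let pid : Path (0:I) 1 := ⟨⟨id, continuous_id⟩, rfl, rfl⟩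
  have h : (seg 0 1).Homotopic pid := SimplyConnectedSpace.paths_homotopic _ _
  have h2 := Path.Homotopic.map h γ.toContinuousMap
  have : pid.map γ.toContinuousMap.continuous = γ.cast γ.source γ.target := by
    ext t; rfl
  rw [this] at h2
  exact h2

lemma path_cast_rfl {u v : X} (p : Path u v) : p.cast rfl rfl = p := by
  ext t; rfl

lemma cast_homotopic {u v u' v' : X} {p q : Path u v} (h : p.Homotopic q)
    (hx : u' = u) (hy : v' = v) : (p.cast hx hy).Homotopic (q.cast hx hy) := by
  subst hx; subst hy; rw [path_cast_rfl, path_cast_rfl]; exact h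

lemma trans_cast_left {u v w u' : X} (p : Path u v) (q : Path v w) (hx : u' = u) :
    ((p.cast hx rfl).trans q) = (p.trans q).cast hx rfl := by
  subst hx; rw [path_cast_rfl, path_cast_rfl]

/-- The initial subpath of `γ`, from `u` to `γ b`. -/
def subp0 {u v : X} (γ : Path u v) (b : I) : Path u (γ b) :=
  (subp γ 0 b).cast γ.source.symm rfl

lemma subp0_trans {u v : X} (γ : Path u v) (b c : I) :
    ((subp0 γ b).trans (subp γ b c)).Homotopic (subp0 γ c) := by
  unfold subp0
  rw [trans_cast_left]
  exact cast_homotopic (subp_trans γ 0 b c) _ _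

lemma pc_subp0_trans {u v : X} (γ : Path u v) (b c : I) :
    pc (subp0 γ b) ≫ pc (subp γ b c) = pc (subp0 γ c) := by
  rw [← pc_trans]; exact pc_homotopic (subp0_trans γ b c)

lemma subp0_one {u v : X} (γ : Path u v) {b : I} (hb : b = 1) :
    (subp0 γ b).Homotopic (γ.cast rfl (by rw [hb]; exact γ.target)) := by
  subst hb
  unfold subp0
  have h := cast_homotopic (subp_zero_one γ) γ.source.symm rfl
  have e : (γ.cast γ.source γ.target).cast γ.source.symm rfl =
      γ.cast rfl γ.target := by ext t; rfl
  rwa [e] at h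

lemma subp0_apply_const {u v : X} (γ : Path u v) {b : I} (hb : b = 0) (t : I) :
    subp0 γ b t = u := by
  subst hb
  show γ (seg 0 0 t) = u
  have : seg 0 0 t = 0 := by ext; rw [seg_apply]; simp
  rw [this, γ.source]

lemma path_const_eq {w z y : X} (p : Path w z) (h : ∀ t, p t = y) :
    p = (Path.refl y).cast (by rw [← p.source]; exact h 0) (by rw [← p.target]; exact h 1) := by
  ext t
  rw [Path.cast_coe]
  exact h t

end AuxSubpath

section AuxMain

variable {X : Type u} [TopologicalSpace X] (x₀ : X) (H : Subgroup (FundamentalGroup X x₀))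

/-- There is an open neighbourhood of the basepoint all of whose loops lie in `H`. -/
def GoodU : Prop :=
  ∃ U : Set X, IsOpen U ∧ x₀ ∈ U ∧ ∀ γ : Path x₀ x₀, range ⇑γ ⊆ U → fl γ ∈ H

lemma wh_basis : @IsTopologicalBasis (FundamentalGroup X x₀) (whPi1 x₀)
    { S | ∃ (a : FundamentalGroup X x₀) (U : Set X), IsOpen U ∧ x₀ ∈ U ∧
        S = { b | ∃ γ : Path x₀ x₀, range ⇑γ ⊆ U ∧ b = pmul a (fl γ) } } := by
  letI := whPi1 x₀
  refine ⟨?_, ?_, rfl⟩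
  · rintro t₁ ⟨a₁, U₁, hU₁, hx₁, rfl⟩ t₂ ⟨a₂, U₂, hU₂, hx₂, rfl⟩ b ⟨⟨γ₁, hγ₁, rfl⟩, ⟨γ₂, hγ₂, hb⟩⟩
    refine ⟨{ c | ∃ γ : Path x₀ x₀, range ⇑γ ⊆ U₁ ∩ U₂ ∧ c = pmul (pmul a₁ (fl γ₁)) (fl γ) },
      ⟨_, U₁ ∩ U₂, hU₁.inter hU₂, ⟨hx₁, hx₂⟩, rfl⟩, ?_, ?_⟩
    · refine ⟨Path.refl x₀, ?_, by simp [fl_refl, pmul_eq]⟩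
      rw [Path.refl_range]
      exact singleton_subset_iff.2 ⟨hx₁, hx₂⟩
    · rintro c ⟨γ, hγ, rfl⟩
      have hmul : ∀ (a : FundamentalGroup X x₀) (δ : Path x₀ x₀),
          pmul (pmul a (fl δ)) (fl γ) = pmul a (fl (δ.trans γ)) := by
        intro a δ; simp only [pmul_eq, fl_trans]; group
      constructor
      · refine ⟨γ₁.trans γ, ?_, hmul a₁ γ₁⟩
        rw [Path.trans_range]
        exact union_subset hγ₁ fun z hz => (hγ hz).1
      · refine ⟨γ₂.trans γ, ?_, by rw [← hmul a₂ γ₂, ← hb]⟩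
        rw [Path.trans_range]
        exact union_subset hγ₂ fun z hz => (hγ hz).2
  · rw [eq_univ_iff_forall]
    intro b
    refine mem_sUnion.2 ⟨_, ⟨b, univ, isOpen_univ, mem_univ _, rfl⟩, ?_⟩
    exact ⟨Path.refl x₀, by rw [Path.refl_range]; exact singleton_subset_iff.2 (mem_univ _),
      by simp [fl_refl, pmul_eq]⟩

lemma wh_iff : @IsOpen _ (whPi1 x₀) (H : Set (FundamentalGroup X x₀)) ↔ GoodU x₀ H := by
  letI := whPi1 x₀
  constructor
  · intro hopen
    obtain ⟨S, ⟨a, U, hUo, hUx, rfl⟩, h1S, hSsub⟩ :=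
      (wh_basis x₀).exists_subset_of_mem_open (show (1 : FundamentalGroup X x₀) ∈
        (H : Set (FundamentalGroup X x₀)) from H.one_mem) hopen
    obtain ⟨γ₀, hγ₀U, hγ₀⟩ := h1S
    refine ⟨U, hUo, hUx, fun γ hγ => ?_⟩
    have heq : pmul a (fl (γ₀.trans γ)) = fl γ := by
      rw [pmul_eq, fl_trans]
      rw [pmul_eq] at hγ₀
      have h1 : fl γ₀ * a = 1 := hγ₀.symm
      rw [mul_assoc, h1, mul_one]
    have hmem : pmul a (fl (γ₀.trans γ)) ∈
        { b | ∃ γ : Path x₀ x₀, range ⇑γ ⊆ U ∧ b = pmul a (fl γ) } := by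
      refine ⟨γ₀.trans γ, ?_, rfl⟩
      rw [Path.trans_range]
      exact union_subset hγ₀U hγ
    have hin := hSsub hmem
    rwa [heq] at hin
  · rintro ⟨U, hUo, hUx, hU⟩
    have : (H : Set (FundamentalGroup X x₀)) =
        ⋃ h : (H : Set (FundamentalGroup X x₀)),
          { b | ∃ γ : Path x₀ x₀, range ⇑γ ⊆ U ∧ b = pmul (h : FundamentalGroup X x₀) (fl γ) } := by
      ext b
      simp only [mem_iUnion, mem_setOf_eq]
      constructor
      · intro hb
        refine ⟨⟨b, hb⟩, Path.refl x₀, ?_, by simp [fl_refl, pmul_eq]⟩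
        rw [Path.refl_range]
        exact singleton_subset_iff.2 hUx
      · rintro ⟨⟨h, hh⟩, γ, hγ, rfl⟩
        rw [pmul_eq]
        exact H.mul_mem (hU γ hγ) hh
    rw [this]
    exact isOpen_iUnion fun h =>
      isOpen_generateFrom_of_mem ⟨(h : FundamentalGroup X x₀), U, hUo, hUx, rfl⟩

lemma qtop_iff_preimage : @IsOpen _ (qtopPi1 x₀) (H : Set (FundamentalGroup X x₀)) ↔
    IsOpen (fl ⁻¹' (H : Set (FundamentalGroup X x₀)) : Set (Path x₀ x₀)) :=
  isOpen_coinduced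

lemma qtop_to_goodU
    (h : IsOpen (fl ⁻¹' (H : Set (FundamentalGroup X x₀)) : Set (Path x₀ x₀))) :
    GoodU x₀ H := by
  rw [isOpen_induced_iff] at h
  obtain ⟨O, hOo, hOpre⟩ := h
  have hreflO : (Path.refl x₀ : C(I, X)) ∈ O := by
    have : Path.refl x₀ ∈ fl ⁻¹' (H : Set (FundamentalGroup X x₀)) := by
      simp only [mem_preimage, fl_refl]
      exact H.one_mem
    rw [← hOpre] at this
    exact this
  obtain ⟨S, ⟨F, ⟨hFfin, hFsub⟩, rfl⟩, hreflS, hSO⟩ :=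
    (isTopologicalBasis_of_subbasis (ContinuousMap.compactOpen_eq (X := I) (Y := X)))
      |>.exists_subset_of_mem_open hreflO hOo
  have hFopen : ∀ m ∈ F, IsOpen m := fun m hm => by
    obtain ⟨K, hK, U, hU, rfl⟩ := hFsub hm
    exact ContinuousMap.isOpen_setOf_mapsTo hK hU
  refine ⟨(fun x => (ContinuousMap.const I x)) ⁻¹' (⋂₀ F), ?_, ?_, ?_⟩
  · exact (hFfin.isOpen_sInter hFopen).preimage ContinuousMap.continuous_const'
  · have : ContinuousMap.const I x₀ = (Path.refl x₀ : C(I, X)) := by ext t; rfl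
    rw [mem_preimage, this]
    exact hreflS
  · intro γ hγ
    have hmem : (γ : C(I, X)) ∈ ⋂₀ F := by
      intro m hm
      obtain ⟨K, hK, U, hU, rfl⟩ := hFsub hm
      intro k hkK
      have h1 : ContinuousMap.const I (γ k) ∈ ⋂₀ F := hγ (mem_range_self k)
      have h2 := h1 _ hm
      exact h2 hkK
    have : (γ : C(I, X)) ∈ O := hSO hmem
    rw [← mem_preimage, hOpre] at this
    exact this

lemma seg_dist' {a b : I} (t : I) : dist (seg a b t) a ≤ dist b a := by
  rw [Subtype.dist_eq, Subtype.dist_eq, Real.dist_eq, Real.dist_eq, seg_apply]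
  have h1 : (1 - (t:ℝ)) * a + t * b - a = (t:ℝ) * (b - a) := by ring
  rw [h1, abs_mul, abs_of_nonneg t.2.1]
  nlinarith [abs_nonneg ((b:ℝ) - a), t.2.1, t.2.2]

lemma goodU_to_qtop [LocallyPathConnectedSpace X] (hslt : IsHSLTAt x₀ H) (hg : GoodU x₀ H) :
    IsOpen (fl ⁻¹' (H : Set (FundamentalGroup X x₀)) : Set (Path x₀ x₀)) := by
  obtain ⟨U, hUo, hUx, hU⟩ := hg
  rw [isOpen_iff_mem_nhds]
  intro α hα
  rw [mem_preimage] at hα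
  -- SLT data along α
  have hVex : ∀ s : I, ∃ V : Set X, IsOpen V ∧ α s ∈ V ∧
      ∀ β : Path (α s) (α s), range ⇑β ⊆ V →
        ∃ γ : Path x₀ x₀, range ⇑γ ⊆ U ∧
          fl (((subp0 α s).trans (β.trans (subp0 α s).symm)).trans γ.symm) ∈ H :=
    fun s => hslt (α s) (subp0 α s) U hUo hUx
  choose V hVo hVmem hVtr using hVex
  set W : I → Set X := fun s => pathComponentIn (V s) (α s) with hWdef
  have hWo : ∀ s, IsOpen (W s) := fun s => (hVo s).pathComponentIn _
  have hWsub : ∀ s, W s ⊆ V s := fun _ => pathComponentIn_subset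
  have hWmem : ∀ s, α s ∈ W s := fun s => mem_pathComponentIn_self (hVmem s)
  -- Lebesgue-type data
  have hεex : ∀ s : I, ∃ ε : ℝ, 0 < ε ∧ ∀ u : I, dist u s < ε → α u ∈ W s := by
    intro s
    have h1 : α ⁻¹' (W s) ∈ 𝓝 s :=
      ((hWo s).preimage α.continuous).mem_nhds (hWmem s)
    obtain ⟨ε, hε0, hball⟩ := Metric.mem_nhds_iff.1 h1
    exact ⟨ε, hε0, fun u hu => hball (by rwa [Metric.mem_ball])⟩
  choose ε hε0 hε using hεex
  obtain ⟨T, hT⟩ := isCompact_univ.elim_finite_subcover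
    (fun s : I => Metric.ball s (ε s / 2)) (fun s => Metric.isOpen_ball)
    (fun u _ => mem_iUnion.2 ⟨u, Metric.mem_ball_self (by linarith [hε0 u])⟩)
  have hTne : T.Nonempty := by
    obtain ⟨s, hs⟩ := mem_iUnion₂.1 (hT (mem_univ 0))
    exact ⟨s, hs.1⟩
  set δ : ℝ := T.inf' hTne (fun s => ε s / 2) with hδdef
  have hδpos : 0 < δ := (Finset.lt_inf'_iff hTne).2 fun s _ => by linarith [hε0 s]
  have hsel : ∀ u : I, ∃ s : I, dist u s < ε s / 2 ∧ δ ≤ ε s / 2 := by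
    intro u
    obtain ⟨s, hsT, hus⟩ := mem_iUnion₂.1 (hT (mem_univ u))
    exact ⟨s, by simpa [Metric.mem_ball] using hus, Finset.inf'_le _ hsT⟩
  choose σ' hσd hσδ using hsel
  obtain ⟨n, hn⟩ := exists_nat_one_div_lt hδpos
  set N : ℕ := n + 1 with hNdef
  have hNr : (0:ℝ) < N := by positivity
  have h1N : 1 / (N:ℝ) < δ := by
    rw [hNdef]; push_cast; exact_mod_cast hn
  have hτmem : ∀ i : ℕ, min ((i:ℝ)/N) 1 ∈ unitInterval :=
    fun i => ⟨le_min (by positivity) zero_le_one, min_le_right _ _⟩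
  set τ : ℕ → I := fun i => ⟨min ((i:ℝ)/N) 1, hτmem i⟩ with hτdef
  have hτ0 : τ 0 = 0 := by
    apply Subtype.ext
    show min (((0:ℕ):ℝ)/(N:ℝ)) 1 = ((0:I):ℝ)
    norm_num
  have hτN : τ N = 1 := by
    apply Subtype.ext
    show min (((N:ℕ):ℝ)/(N:ℝ)) 1 = ((1:I):ℝ)
    rw [div_self hNr.ne']
    norm_num
  have hτmono : ∀ i j : ℕ, i ≤ j → τ i ≤ τ j := by
    intro i j hij
    show min ((i:ℝ)/N) 1 ≤ min ((j:ℝ)/N) 1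
    have hc : (i:ℝ) ≤ j := Nat.cast_le.2 hij
    gcongr
  have hτdist : ∀ i : ℕ, ∀ u : I, u ∈ Icc (τ i) (τ (i+1)) → dist u (τ i) ≤ 1/(N:ℝ) := by
    intro i u hu
    obtain ⟨h1, h2⟩ := hu
    have h1' : min ((i:ℝ)/N) 1 ≤ (u:ℝ) := Subtype.coe_le_coe.2 h1
    have h2' : (u:ℝ) ≤ min ((((i+1):ℕ):ℝ)/N) 1 := Subtype.coe_le_coe.2 h2
    rw [Nat.cast_add, Nat.cast_one] at h2'
    rw [Subtype.dist_eq, Real.dist_eq, abs_of_nonneg (sub_nonneg.2 h1')]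
    have h0 : (0:ℝ) ≤ 1/N := by positivity
    have key : min (((i:ℝ)+1)/N) 1 ≤ min ((i:ℝ)/N) 1 + 1/N := by
      have e1 : ((i:ℝ)+1)/N = (i:ℝ)/N + 1/N := by ring
      calc min (((i:ℝ)+1)/N) 1 ≤ min ((i:ℝ)/N + 1/N) (1 + 1/N) :=
            min_le_min (by rw [e1]) (by linarith)
        _ = min ((i:ℝ)/N) 1 + 1/N := min_add_add_right _ _ _
    show (u:ℝ) - min ((i:ℝ)/N) 1 ≤ 1/(N:ℝ)
    linarith
  have hIntW : ∀ i : ℕ, ∀ u : I, dist u (τ i) ≤ 1/(N:ℝ) → α u ∈ W (σ' (τ i)) := by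
    intro i u hu
    apply hε
    have hd1 := hσd (τ i)
    have hd2 := hσδ (τ i)
    calc dist u (σ' (τ i)) ≤ dist u (τ i) + dist (τ i) (σ' (τ i)) := dist_triangle _ _ _
      _ < ε (σ' (τ i)) := by linarith
  have hθmem : ∀ i : ℕ, ∀ u : I, dist u (σ' (τ i)) ≤ dist (τ i) (σ' (τ i)) →
      α u ∈ W (σ' (τ i)) := by
    intro i u hu
    apply hε
    have h1 := hσd (τ i)
    have h2 := hε0 (σ' (τ i))
    linarith
  set Qs : ℕ → Set X := fun i =>
    pathComponentIn (W (σ' (τ (i-1))) ∩ W (σ' (τ i))) (α (τ i)) with hQdef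
  set O : Set (Path x₀ x₀) := {f | ∀ i : ℕ, i < N →
      MapsTo ⇑f (Icc (τ i) (τ (i+1))) (W (σ' (τ i))) ∧ (0 < i → f (τ i) ∈ Qs i)} with hOdef
  have hαWi : ∀ i : ℕ, α (τ i) ∈ W (σ' (τ i)) := fun i =>
    hIntW i (τ i) (by rw [dist_self]; positivity)
  have hαWprev : ∀ i : ℕ, 0 < i → α (τ i) ∈ W (σ' (τ (i-1))) := by
    intro i hi0
    apply hIntW (i-1) (τ i)
    apply hτdist (i-1) (τ i)
    rw [Nat.sub_add_cancel hi0]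
    exact ⟨hτmono _ _ (Nat.sub_le i 1), le_rfl⟩
  have hαO : α ∈ O := by
    intro i hiN
    refine ⟨fun u hu => hIntW i u (hτdist i u hu), fun hi0 =>
      mem_pathComponentIn_self ⟨hαWprev i hi0, hαWi i⟩⟩
  have hOopen : IsOpen O := by
    have hOeq : O = ⋂ i ∈ Finset.range N,
        ({f : Path x₀ x₀ | MapsTo ⇑f (Icc (τ i) (τ (i+1))) (W (σ' (τ i)))} ∩
          {f : Path x₀ x₀ | 0 < i → f (τ i) ∈ Qs i}) := by
      ext f
      simp only [hOdef, mem_setOf_eq, mem_iInter, mem_inter_iff, Finset.mem_range]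
      try exact ⟨fun h i hi => h i hi, fun h i hi => h i hi⟩
    rw [hOeq]
    apply isOpen_biInter_finset
    intro i _
    apply IsOpen.inter
    · have he : {f : Path x₀ x₀ | MapsTo ⇑f (Icc (τ i) (τ (i+1))) (W (σ' (τ i)))} =
          ((↑) : Path x₀ x₀ → C(I, X)) ⁻¹'
            {g : C(I, X) | MapsTo ⇑g (Icc (τ i) (τ (i+1))) (W (σ' (τ i)))} := rfl
      rw [he]
      exact (ContinuousMap.isOpen_setOf_mapsTo isClosed_Icc.isCompact (hWo _)).preimage
        continuous_induced_dom
    · rcases Nat.eq_zero_or_pos i with h0 | h0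
      · subst h0
        have huniv : {f : Path x₀ x₀ | 0 < 0 → f (τ 0) ∈ Qs 0} = univ := by
          ext f; simp
        rw [huniv]
        exact isOpen_univ
      · have hQo : IsOpen (Qs i) := ((hWo _).inter (hWo _)).pathComponentIn _
        have he : {f : Path x₀ x₀ | 0 < i → f (τ i) ∈ Qs i} =
            ((↑) : Path x₀ x₀ → C(I, X)) ⁻¹'
              {g : C(I, X) | MapsTo ⇑g {τ i} (Qs i)} := by
          ext f
          simp [MapsTo, h0]
        rw [he]
        exact (ContinuousMap.isOpen_setOf_mapsTo isCompact_singleton hQo).preimage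
          continuous_induced_dom
  have hclaim : ∀ f ∈ O, fl f ∈ H := by
    intro f hf
    have hN0 : 0 < N := by omega
    have hfτ0 : f (τ 0) = x₀ := by rw [hτ0]; exact f.source
    have hατ0 : α (τ 0) = x₀ := by rw [hτ0]; exact α.source
    have hfτN : f (τ N) = x₀ := by rw [hτN]; exact f.target
    have hατN : α (τ N) = x₀ := by rw [hτN]; exact α.target
    set E : ℕ → Set X := fun i =>
      (if i < N then W (σ' (τ i)) else univ) ∩
        ((if 0 < i then W (σ' (τ (i-1))) else univ) ∩
          (if 0 < i ∧ i < N then univ else {x₀})) with hEdef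
    have hJ : ∀ i, i ≤ N → JoinedIn (E i) (α (τ i)) (f (τ i)) := by
      intro i hi
      rcases Nat.eq_zero_or_pos i with h0 | hpos
      · subst h0
        have hmem : α (τ 0) ∈ E 0 := by
          refine ⟨?_, ?_, ?_⟩
          · rw [if_pos hN0]; exact hαWi 0
          · rw [if_neg (lt_irrefl 0)]; exact mem_univ _
          · rw [if_neg (by omega)]; exact mem_singleton_iff.2 hατ0
        have heq : f (τ 0) = α (τ 0) := by rw [hfτ0, hατ0]
        rw [heq]
        exact JoinedIn.refl hmem
      · rcases eq_or_lt_of_le hi with hNe | hlt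
        · have hmem : α (τ i) ∈ E i := by
          -- i = N
            refine ⟨?_, ?_, ?_⟩
            · rw [if_neg (by omega)]; exact mem_univ _
            · rw [if_pos hpos, hNe]; exact hαWprev N (by omega)
            · rw [if_neg (by omega), hNe]; exact mem_singleton_iff.2 hατN
          have heq : f (τ i) = α (τ i) := by rw [hNe, hfτN, hατN]
          rw [heq]
          exact JoinedIn.refl hmem
        · have hmemQ : α (τ i) ∈ W (σ' (τ (i-1))) ∩ W (σ' (τ i)) :=
            ⟨hαWprev i hpos, hαWi i⟩
          have hQpc : IsPathConnected (Qs i) := isPathConnected_pathComponentIn hmemQ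
          have h1 : α (τ i) ∈ Qs i := mem_pathComponentIn_self hmemQ
          have h2 : f (τ i) ∈ Qs i := (hf i hlt).2 hpos
          refine (hQpc.joinedIn _ h1 _ h2).mono ?_
          intro z hz
          have hzW := pathComponentIn_subset hz
          exact ⟨by rw [if_pos hlt]; exact hzW.2, by rw [if_pos hpos]; exact hzW.1,
            by rw [if_pos ⟨hpos, hlt⟩]; exact mem_univ _⟩
    have hE1 : ∀ i, i < N → E i ⊆ W (σ' (τ i)) := by
      intro i hi z hz
      have h := hz.1; rwa [if_pos hi] at h
    have hE2 : ∀ i, 0 < i → E i ⊆ W (σ' (τ (i-1))) := by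
      intro i hi z hz
      have h := hz.2.1; rwa [if_pos hi] at h
    have hE0 : ∀ i, (i = 0 ∨ i = N) → E i ⊆ {x₀} := by
      intro i hi z hz
      have h := hz.2.2; rwa [if_neg (by omega)] at h
    have hconst : ∀ {u v : X} (p : Path u v) (h : ∀ t, p t = x₀),
        pc p = eqToHom (show FundamentalGroupoid.mk u = FundamentalGroupoid.mk x₀ by
            rw [← p.source, h 0]) ≫
          eqToHom (show FundamentalGroupoid.mk x₀ = FundamentalGroupoid.mk v by
            rw [← p.target, h 1]) := by
      intro u v p h
      conv_lhs => rw [path_const_eq p h]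
      rw [pc_cast, pc_refl]
      simp
    have main : ∀ i, ∀ hi : i ≤ N,
        fa (pc (subp0 α (τ i)) ≫ pc ((hJ i hi).somePath) ≫ inv (pc (subp0 f (τ i)))) ∈ H := by
      intro i
      induction i with
      | zero =>
        intro hi
        have hc1 : ∀ t, subp0 α (τ 0) t = x₀ := subp0_apply_const α hτ0
        have hc2 : ∀ t, subp0 f (τ 0) t = x₀ := subp0_apply_const f hτ0
        have hc3 : ∀ t, (hJ 0 hi).somePath t = x₀ :=
          fun t => hE0 0 (Or.inl rfl) ((hJ 0 hi).somePath_mem t)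
        rw [hconst _ hc1, hconst _ hc2, hconst _ hc3]
        simp only [Category.assoc, IsIso.inv_comp, inv_eqToHom, eqToHom_trans,
          eqToHom_trans_assoc, eqToHom_refl, Category.comp_id, Category.id_comp]
        rw [fa_id]
        exact H.one_mem
      | succ i ih =>
        intro hi1
        have hiN : i < N := Nat.lt_of_succ_le hi1
        have hi : i ≤ N := hiN.le
        have hstep := ih hi
        set s := σ' (τ i) with hsdef
        set θ : Path (α s) (α (τ i)) := subp α s (τ i) with hθdef
        set a' : Path (α (τ i)) (α (τ (i+1))) := subp α (τ i) (τ (i+1)) with hadef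
        set g' : Path (f (τ i)) (f (τ (i+1))) := subp f (τ i) (τ (i+1)) with hgdef
        set ηi : Path (α (τ i)) (f (τ i)) := (hJ i hi).somePath with hηidef
        set ηi1 : Path (α (τ (i+1))) (f (τ (i+1))) := (hJ (i+1) hi1).somePath with hηi1def
        set β : Path (α s) (α s) :=
          θ.trans ((a'.trans (ηi1.trans (g'.symm.trans ηi.symm))).trans θ.symm) with hβdef
        have hθr : range ⇑θ ⊆ W s := by
          rintro _ ⟨t, rfl⟩
          exact hθmem i _ (seg_dist' t)
        have ha'r : range ⇑a' ⊆ W s := by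
          rintro _ ⟨t, rfl⟩
          exact hIntW i _ (hτdist i _ (seg_mem_Icc (hτmono i (i+1) (Nat.le_succ i)) t))
        have hg'r : range ⇑g' ⊆ W s := by
          rintro _ ⟨t, rfl⟩
          exact (hf i hiN).1 (seg_mem_Icc (hτmono i (i+1) (Nat.le_succ i)) t)
        have hηir : range ⇑ηi ⊆ W s := by
          rintro _ ⟨t, rfl⟩
          exact hE1 i hiN ((hJ i hi).somePath_mem t)
        have hηi1r : range ⇑ηi1 ⊆ W s := by
          rintro _ ⟨t, rfl⟩
          exact hE2 (i+1) (Nat.succ_pos i) ((hJ (i+1) hi1).somePath_mem t)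
        have hβr : range ⇑β ⊆ V s := by
          refine subset_trans ?_ (hWsub s)
          rw [hβdef]
          simp only [Path.trans_range, Path.symm_range]
          exact union_subset hθr (union_subset (union_subset ha'r
            (union_subset hηi1r (union_subset hg'r hηir))) hθr)
        obtain ⟨γU, hγUr, hmemH⟩ := hVtr s β hβr
        have hγH : fa (pc γU) ∈ H := by rw [← fl_eq_fa]; exact hU γU hγUr
        have hbig : fa (pc (subp0 α s) ≫ pc β ≫ inv (pc (subp0 α s)) ≫ inv (pc γU)) ∈ H := by
          have he : fl (((subp0 α s).trans (β.trans (subp0 α s).symm)).trans γU.symm) =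
              fa (pc (subp0 α s) ≫ pc β ≫ inv (pc (subp0 α s)) ≫ inv (pc γU)) := by
            rw [fl_eq_fa]
            congr 1
            rw [pc_trans, pc_trans, pc_trans, pc_symm, pc_symm]
            simp only [Category.assoc]
          rwa [he] at hmemH
        have hcore : fa (pc (subp0 α s) ≫ pc β ≫ inv (pc (subp0 α s))) ∈ H := by
          have h2 : fa ((pc (subp0 α s) ≫ pc β ≫ inv (pc (subp0 α s))) ≫ inv (pc γU)) ∈ H := by
            simpa only [Category.assoc] using hbig
          rw [fa_comp, fa_inv] at h2
          have h3 := H.mul_mem hγH h2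
          rwa [← mul_assoc, mul_inv_cancel, one_mul] at h3
        have hA1 : pc (subp0 α s) ≫ pc θ = pc (subp0 α (τ i)) := pc_subp0_trans α s (τ i)
        have hA2 : pc (subp0 α (τ i)) ≫ pc a' = pc (subp0 α (τ (i+1))) :=
          pc_subp0_trans α (τ i) (τ (i+1))
        have hF2 : pc (subp0 f (τ i)) ≫ pc g' = pc (subp0 f (τ (i+1))) :=
          pc_subp0_trans f (τ i) (τ (i+1))
        have hβpc : pc β = pc θ ≫ pc a' ≫ pc ηi1 ≫ inv (pc g') ≫ inv (pc ηi) ≫ inv (pc θ) := by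
          rw [hβdef]
          simp only [pc_trans, pc_symm, Category.assoc]
        have hom_eq : pc (subp0 α (τ (i+1))) ≫ pc ηi1 ≫ inv (pc (subp0 f (τ (i+1)))) =
            (pc (subp0 α s) ≫ pc β ≫ inv (pc (subp0 α s))) ≫
              (pc (subp0 α (τ i)) ≫ pc ηi ≫ inv (pc (subp0 f (τ i)))) := by
          rw [hβpc, ← hA2, ← hF2, ← hA1]
          simp only [Category.assoc, IsIso.inv_comp, IsIso.inv_hom_id_assoc]
        rw [hom_eq, fa_comp]
        exact H.mul_mem hstep hcore
    have hfin := main N le_rfl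
    have hcη : ∀ t, (hJ N le_rfl).somePath t = x₀ :=
      fun t => hE0 N (Or.inr rfl) ((hJ N le_rfl).somePath_mem t)
    rw [pc_homotopic (subp0_one α hτN), pc_homotopic (subp0_one f hτN), hconst _ hcη,
      pc_cast, pc_cast] at hfin
    simp only [Category.assoc, IsIso.inv_comp, inv_eqToHom, eqToHom_trans,
      eqToHom_trans_assoc, eqToHom_refl, Category.comp_id, Category.id_comp] at hfin
    rw [fa_comp, fa_inv, ← fl_eq_fa, ← fl_eq_fa] at hfin
    have hrw : fl f = fl α * ((fl f)⁻¹ * fl α)⁻¹ := by group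
    rw [hrw]
    exact H.mul_mem hα (H.inv_mem hfin)
  exact mem_of_superset (hOopen.mem_nhds hαO) (fun f hf => hclaim f hf)



end AuxMain


/-- Let `H` be a subgroup of `π₁(X, x₀)` and let `X` be a locally
path-connected space that is `H`-SLT at `x₀`. Then `H` is an open subgroup of
`π₁^wh(X, x₀)` if and only if `H` is an open subgroup of `π₁^qtop(X, x₀)`. -/
theorem statement16 {X : Type u} [TopologicalSpace X] [PathConnectedSpace X]
    [LocallyPathConnectedSpace X] (x₀ : X)
    (H : Subgroup (FundamentalGroup X x₀)) (hslt : IsHSLTAt x₀ H) :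
    @IsOpen _ (whPi1 x₀) (H : Set (FundamentalGroup X x₀)) ↔
      @IsOpen _ (qtopPi1 x₀) (H : Set (FundamentalGroup X x₀)) := by
  rw [wh_iff, qtop_iff_preimage]
  constructor
  · exact fun h => goodU_to_qtop x₀ H hslt h
  · exact fun h => qtop_to_goodU x₀ H h

end SLTF
end

section
/- If p : X̂ → X is an lpc₀-covering map with p_*π₁(X̂, x̂₀) = H ≤ π₁(X, x₀), then every fiber p⁻¹(x) of p, with the subspace topology, is a Hausdorff space. -/
open Set TopologicalSpace unitInterval

universe u

namespace SLTF

attribute [local instance] Path.Homotopic.setoid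

variable {X : Type u} [TopologicalSpace X]

section Aux

open CategoryTheory

/-- A path as a hom in the fundamental groupoid. -/
def hq {x y : X} (p : Path x y) : FundamentalGroupoid.mk x ⟶ FundamentalGroupoid.mk y := ⟦p⟧

lemma hq_trans {x y z : X} (p : Path x y) (q : Path y z) :
    hq (p.trans q) = hq p ≫ hq q :=
  rfl

lemma hq_symm {x y : X} (p : Path x y) : hq p.symm = inv (hq p) := by
  rw [← Groupoid.inv_eq_inv]; rfl

lemma hq_refl {x : X} : hq (Path.refl x) = 𝟙 (FundamentalGroupoid.mk x) := rfl

lemma fg_ext {x : X} {a b : FundamentalGroup X x}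
    (h : FundamentalGroup.toArrow a = FundamentalGroup.toArrow b) : a = b := h

lemma fl_hom {x : X} (γ : Path x x) : (fl γ).toArrow = hq γ := rfl

lemma one_hom' {x : X} : ((1 : FundamentalGroup X x)).toArrow = 𝟙 (FundamentalGroupoid.mk x) := rfl

lemma mul_hom' {x : X} (g h : FundamentalGroup X x) : (g * h).toArrow = h.toArrow ≫ g.toArrow := rfl

lemma inv_hom' {x : X} (g : FundamentalGroup X x) : (g⁻¹).toArrow = inv g.toArrow := by
  rw [← Groupoid.inv_eq_inv]; rfl

variable {x₀ y z : X}

lemma flE1 (a : Path x₀ y) : fl (a.trans a.symm) = 1 := by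
  apply fg_ext; simp [fl_hom, one_hom', hq_trans, hq_symm]

lemma flE2 (a b : Path x₀ y) : fl (b.trans a.symm) = (fl (a.trans b.symm))⁻¹ := by
  apply fg_ext; simp [fl_hom, inv_hom', hq_trans, hq_symm]

lemma flE3 (a b c : Path x₀ y) :
    fl (a.trans c.symm) = fl (b.trans c.symm) * fl (a.trans b.symm) := by
  apply fg_ext; simp [fl_hom, mul_hom', hq_trans, hq_symm]

lemma flE4 (a b : Path x₀ y) (ζ : Path y z) :
    fl ((a.trans ζ).trans (b.trans ζ).symm) = fl (a.trans b.symm) := by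
  apply fg_ext; simp [fl_hom, hq_trans, hq_symm, Path.trans_symm]

lemma flE5 (a b : Path x₀ y) (γ γ' : Path y y) :
    fl ((a.trans γ).trans ((b.trans γ').symm)) =
      fl ((a.trans (γ.trans γ'.symm)).trans b.symm) := by
  apply fg_ext; simp [fl_hom, hq_trans, hq_symm, Path.trans_symm]

lemma flE6 (a : Path x₀ y) : fl (a.trans ((a.trans (Path.refl y)).symm)) = 1 := by
  apply fg_ext; simp [fl_hom, one_hom', hq_trans, hq_symm, hq_refl, Path.trans_symm]

lemma flE7 (a : Path x₀ y) (ζ : Path y z) {w : X} (ζ' : Path z w) :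
    fl (((a.trans ζ).trans ζ').trans ((a.trans (ζ.trans ζ')).symm)) = 1 := by
  apply fg_ext; simp [fl_hom, one_hom', hq_trans, hq_symm, Path.trans_symm]

variable {H : Subgroup (FundamentalGroup X x₀)}

lemma cast_rfl {w : X} (γ : Path x₀ w) (e : w = w) : γ.cast rfl e = γ := rfl

lemma hrel_equiv : Equivalence (HRel x₀ (loopMem x₀ H)) := by
  constructor
  · rintro ⟨t, a⟩
    exact ⟨rfl, show fl (a.trans ((a.cast rfl rfl).symm)) ∈ H by
      rw [cast_rfl, flE1]; exact H.one_mem⟩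
  · rintro ⟨ta, a⟩ ⟨tb, b⟩ ⟨e, h⟩
    dsimp at e; subst e
    rw [cast_rfl] at h
    exact ⟨rfl, show fl (b.trans ((a.cast rfl rfl).symm)) ∈ H by
      rw [cast_rfl, flE2]; exact H.inv_mem h⟩
  · rintro ⟨ta, a⟩ ⟨tb, b⟩ ⟨tc, c⟩ ⟨e1, h1⟩ ⟨e2, h2⟩
    dsimp at e1 e2; subst e1; subst e2
    rw [cast_rfl] at h1 h2
    exact ⟨rfl, show fl (a.trans ((c.cast rfl rfl).symm)) ∈ H by
      rw [cast_rfl, flE3 a b c]; exact H.mul_mem h2 h1⟩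

lemma mk_eq_iff {a b : PPath X x₀} :
    mkX x₀ (loopMem x₀ H) a = mkX x₀ (loopMem x₀ H) b ↔ HRel x₀ (loopMem x₀ H) a b := by
  constructor
  · intro h
    exact (hrel_equiv.eqvGen_iff).mp (Quot.eq.mp h)
  · exact Quot.sound

lemma mk_eq_iff' {w : X} {p q : Path x₀ w} :
    mkX x₀ (loopMem x₀ H) ⟨w, p⟩ = mkX x₀ (loopMem x₀ H) ⟨w, q⟩ ↔ fl (p.trans q.symm) ∈ H := by
  rw [mk_eq_iff]
  constructor
  · rintro ⟨e, h⟩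
    rwa [cast_rfl] at h
  · intro h
    exact ⟨rfl, show fl (p.trans ((q.cast rfl rfl).symm)) ∈ H by rwa [cast_rfl]⟩

lemma endpt_mk (a : PPath X x₀) : endpt x₀ (loopMem x₀ H) (mkX x₀ (loopMem x₀ H) a) = a.target :=
  rfl

lemma whBasic_isOpen {a : PPath X x₀} {U : Set X} (hU : IsOpen U) (ha : a.target ∈ U) :
    IsOpen (whBasic x₀ (loopMem x₀ H) a U) :=
  TopologicalSpace.GenerateOpen.basic _ ⟨a, U, hU, ha, rfl⟩

lemma hrel_extend {w w' : X} {a b : Path x₀ w} (h : fl (a.trans b.symm) ∈ H) (ζ : Path w w') :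
    mkX x₀ (loopMem x₀ H) ⟨w', a.trans ζ⟩ = mkX x₀ (loopMem x₀ H) ⟨w', b.trans ζ⟩ :=
  mk_eq_iff'.mpr (by rw [flE4]; exact h)

lemma mk_assoc {w w' w'' : X} (a : Path x₀ w) (ζ : Path w w') (ζ' : Path w' w'') :
    mkX x₀ (loopMem x₀ H) ⟨w'', (a.trans ζ).trans ζ'⟩ =
      mkX x₀ (loopMem x₀ H) ⟨w'', a.trans (ζ.trans ζ')⟩ :=
  mk_eq_iff'.mpr (by rw [flE7]; exact H.one_mem)

lemma mem_whBasic_self {a : PPath X x₀} {U : Set X} (ha : a.target ∈ U) :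
    mkX x₀ (loopMem x₀ H) a ∈ whBasic x₀ (loopMem x₀ H) a U := by
  obtain ⟨t, pa⟩ := a
  exact ⟨t, Path.refl t, by rw [Path.refl_range]; simpa using ha,
    mk_eq_iff'.mpr (by rw [flE6]; exact H.one_mem)⟩

lemma whBasic_mono {a : PPath X x₀} {U V : Set X} (h : U ⊆ V) :
    whBasic x₀ (loopMem x₀ H) a U ⊆ whBasic x₀ (loopMem x₀ H) a V := by
  rintro q ⟨w, β, hβ, rfl⟩
  exact ⟨w, β, hβ.trans h, rfl⟩

lemma nbhd_basis {S : Set (Xtilde x₀ (loopMem x₀ H))} (hS : IsOpen S) :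
    ∀ a : PPath X x₀, mkX x₀ (loopMem x₀ H) a ∈ S →
      ∃ U : Set X, IsOpen U ∧ a.target ∈ U ∧ whBasic x₀ (loopMem x₀ H) a U ⊆ S := by
  have hS' : TopologicalSpace.GenerateOpen
      { S | ∃ (α : PPath X x₀) (U : Set X), IsOpen U ∧ α.target ∈ U ∧
        S = whBasic x₀ (loopMem x₀ H) α U } S := hS
  clear hS
  induction hS' with
  | basic S hSmem =>
    obtain ⟨α, U, hU, hαU, rfl⟩ := hSmem
    rintro ⟨ta, pa⟩ ha
    obtain ⟨w, β, hβU, heq⟩ := ha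
    obtain ⟨e, hP⟩ := mk_eq_iff.mp heq
    dsimp at e hP; subst e
    rw [cast_rfl] at hP
    refine ⟨U, hU, ?_, ?_⟩
    · exact hβU ⟨1, β.target⟩
    · rintro q ⟨w', ζ, hζ, rfl⟩
      refine ⟨w', β.trans ζ, ?_, ?_⟩
      · rw [Path.trans_range]; exact union_subset hβU hζ
      · calc mkX x₀ (loopMem x₀ H) ⟨w', pa.trans ζ⟩
            = mkX x₀ (loopMem x₀ H) ⟨w', (α.path.trans β).trans ζ⟩ := hrel_extend hP ζ
          _ = mkX x₀ (loopMem x₀ H) ⟨w', α.path.trans (β.trans ζ)⟩ := mk_assoc _ _ _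
  | univ =>
    intro a _
    exact ⟨univ, isOpen_univ, mem_univ _, subset_univ _⟩
  | inter S₁ S₂ hS₁ hS₂ ih₁ ih₂ =>
    intro a ha
    obtain ⟨U₁, hU₁, haU₁, hsub₁⟩ := ih₁ a ha.1
    obtain ⟨U₂, hU₂, haU₂, hsub₂⟩ := ih₂ a ha.2
    exact ⟨U₁ ∩ U₂, hU₁.inter hU₂, ⟨haU₁, haU₂⟩,
      subset_inter ((whBasic_mono inter_subset_left).trans hsub₁)
        ((whBasic_mono inter_subset_right).trans hsub₂)⟩
  | sUnion 𝒯 h𝒯 ih =>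
    intro a ha
    obtain ⟨T, hT, haT⟩ := ha
    obtain ⟨U, hU, haU, hsub⟩ := ih T hT a haT
    exact ⟨U, hU, haU, hsub.trans (subset_sUnion_of_mem hT)⟩

lemma zero_ne_one_I : (0 : I) ≠ 1 := fun h => by
  simpa using congrArg Subtype.val h

/-- The key separation lemma, from unique path lifting. -/
lemma sep (huplp : UPLP x₀ (loopMem x₀ H)) {x : X} (α β : Path x₀ x)
    (hne : fl (α.trans β.symm) ∉ H) :
    ∃ U : Set X, IsOpen U ∧ x ∈ U ∧
      ∀ γ : Path x x, range ⇑γ ⊆ U → fl ((α.trans γ).trans β.symm) ∉ H := by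
  by_contra hcon
  push_neg at hcon
  have key : ∀ S : Set (Xtilde x₀ (loopMem x₀ H)), IsOpen S →
      mkX x₀ (loopMem x₀ H) ⟨x, α⟩ ∈ S → mkX x₀ (loopMem x₀ H) ⟨x, β⟩ ∈ S := by
    intro S hS hmem
    obtain ⟨U, hU, hxU, hsub⟩ := nbhd_basis hS ⟨x, α⟩ hmem
    obtain ⟨γ, hγU, hγH⟩ := hcon U hU hxU
    refine hsub ⟨x, γ, hγU, ?_⟩
    exact mk_eq_iff'.mpr (by rw [flE2]; exact H.inv_mem hγH)
  classical
  set A := mkX x₀ (loopMem x₀ H) ⟨x, α⟩ with hA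
  set B := mkX x₀ (loopMem x₀ H) ⟨x, β⟩ with hB
  have hg : Continuous (fun t : I => if t = 1 then A else B) := by
    rw [continuous_def]
    intro S hS
    by_cases hBS : B ∈ S
    · by_cases hAS : A ∈ S
      · have : (fun t : I => if t = 1 then A else B) ⁻¹' S = univ :=
          eq_univ_of_forall fun t => by
            by_cases h1 : t = 1 <;> simp [h1, hAS, hBS]
        rw [this]; exact isOpen_univ
      · have : (fun t : I => if t = 1 then A else B) ⁻¹' S = {(1 : I)}ᶜ := by
          ext t; by_cases h1 : t = 1 <;> simp [h1, hAS, hBS]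
        rw [this]; exact isOpen_compl_singleton
    · have hAS : A ∉ S := fun hc => hBS (key S hS hc)
      have : (fun t : I => if t = 1 then A else B) ⁻¹' S = ∅ := by
        ext t; by_cases h1 : t = 1 <;> simp [h1, hAS, hBS]
      rw [this]; exact isOpen_empty
  have hEq := huplp ⟨fun t : I => if t = 1 then A else B, hg⟩ ⟨fun _ => B, continuous_const⟩
    (by simp [zero_ne_one_I]) (by
      intro t
      simp only [ContinuousMap.coe_mk]
      by_cases h1 : t = 1
      · rw [if_pos h1]; rfl
      · rw [if_neg h1])
  have h1 : A = B := by
    have := DFunLike.congr_fun hEq (1 : I)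
    simpa using this
  exact hne (mk_eq_iff'.mp h1)

/-- The fiber of the endpoint projection is Hausdorff. -/
lemma fib_t2 (huplp : UPLP x₀ (loopMem x₀ H)) (x : X) :
    T2Space (Fib x₀ (loopMem x₀ H) x) := by
  have rep : ∀ q : Fib x₀ (loopMem x₀ H) x, ∃ δ : Path x₀ x, q = mkFib x₀ (loopMem x₀ H) δ := by
    rintro ⟨q, hq⟩
    induction q using Quot.ind with
    | _ a =>
      obtain ⟨t, pa⟩ := a
      have ht : t = x := hq
      subst ht
      exact ⟨pa, rfl⟩
  constructor
  rintro q₁ q₂ hne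
  obtain ⟨α, rfl⟩ := rep q₁
  obtain ⟨β, rfl⟩ := rep q₂
  have hneH : fl (α.trans β.symm) ∉ H := by
    intro hmem
    exact hne (Subtype.ext (mk_eq_iff'.mpr hmem))
  obtain ⟨U, hU, hxU, hsep⟩ := sep huplp α β hneH
  refine ⟨Subtype.val ⁻¹' whBasic x₀ (loopMem x₀ H) ⟨x, α⟩ U,
    Subtype.val ⁻¹' whBasic x₀ (loopMem x₀ H) ⟨x, β⟩ U,
    (whBasic_isOpen hU hxU).preimage continuous_subtype_val,
    (whBasic_isOpen hU hxU).preimage continuous_subtype_val,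
    mem_whBasic_self hxU, mem_whBasic_self hxU, ?_⟩
  rw [disjoint_left]
  intro q hq1 hq2
  obtain ⟨w₁, δ₁, hδ₁, he₁⟩ := hq1
  obtain ⟨w₂, δ₂, hδ₂, he₂⟩ := hq2
  have hw₁ : x = w₁ := by rw [← q.prop, he₁]; rfl
  subst hw₁
  have hw₂ : x = w₂ := by rw [← q.prop, he₂]; rfl
  subst hw₂
  have hthis : mkX x₀ (loopMem x₀ H) ⟨x, α.trans δ₁⟩ = mkX x₀ (loopMem x₀ H) ⟨x, β.trans δ₂⟩ :=
    he₁.symm.trans he₂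
  have hmem := mk_eq_iff'.mp hthis
  rw [flE5] at hmem
  refine hsep (δ₁.trans δ₂.symm) ?_ hmem
  rw [Path.trans_range, Path.symm_range]
  exact union_subset hδ₁ hδ₂

end Aux

/-- If `p : X̂ → X` is an `lpc₀`-covering map with
`p₊π₁(X̂, x̂₀) = H ≤ π₁(X, x₀)`, then every fiber `p⁻¹(x)` of `p`, with the subspace
topology, is a Hausdorff space. -/
theorem statement18 {X Y : Type u} [TopologicalSpace X] [PathConnectedSpace X]
    [TopologicalSpace Y] (p : Y → X) (x₀ : X)
    (H : Subgroup (FundamentalGroup X x₀)) (hcov : IsLpc0Covering p x₀ H) :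
    ∀ x : X, T2Space { y : Y // p y = x } := by
  obtain ⟨φ, hφ⟩ := hcov.equiv
  intro x
  have hT2 : T2Space (Fib x₀ (loopMem x₀ H) x) := fib_t2 hcov.uplp x
  have hinj : Function.Injective
      (fun y : { y : Y // p y = x } => (⟨φ y.1, by rw [hφ]; exact y.2⟩ :
        Fib x₀ (loopMem x₀ H) x)) := by
    intro a b hab
    apply Subtype.ext
    apply φ.injective
    exact congrArg Subtype.val hab
  have hcont : Continuous
      (fun y : { y : Y // p y = x } => (⟨φ y.1, by rw [hφ]; exact y.2⟩ :
        Fib x₀ (loopMem x₀ H) x)) :=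
    Continuous.subtype_mk (φ.continuous.comp continuous_subtype_val) _
  exact T2Space.of_injective_continuous hinj hcont


end SLTF
end
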